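/- For t > 0 and f, g ∈ L¹(ℝ) ∩ L²(ℝ), define the scaled functions f⁽ᴺ⁾(x) = N^{-1/2} f(x/N). Then for any r₁, r₂ ≥ 0, the limit as N → ∞ of ∫₀ᵗ ∫_ℝ (P_{s+r₁} f⁽ᴺ⁾)(y) (P_{s+r₂} g⁽ᴺ⁾)(y) dy ds equals t · ∫_ℝ f(x) g(x) dx, where P_t denotes the heat semigroup with kernel p_t(x) = (2πt)^{-1/2} e^{-x²/(2t)}. -/

import Mathlib

open MeasureTheory Real Filter

noncomputable def heatKernel (t x : ℝ) : ℝ :=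
  (1 / Real.sqrt (2 * Real.pi * t)) * Real.exp (-x ^ 2 / (2 * t))

noncomputable def heatP (t : ℝ) (f : ℝ → ℝ) (x : ℝ) : ℝ :=
  if t = 0 then f x else ∫ y : ℝ, heatKernel t (x - y) * f y

noncomputable def scaled (N : ℝ) (f : ℝ → ℝ) (x : ℝ) : ℝ :=
  (1 / Real.sqrt N) * f (x / N)

noncomputable def ft (f : ℝ → ℝ) (z : ℝ) : ℂ :=
  ∫ y : ℝ, (f y : ℂ) * Complex.exp (Complex.I * z * y)

lemma heatKernel_nonneg (t x : ℝ) : 0 ≤ heatKernel t x := by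
  unfold heatKernel; positivity

lemma heatKernel_continuous (t : ℝ) : Continuous (fun x => heatKernel t x) := by
  unfold heatKernel
  exact continuous_const.mul ((continuous_neg.comp (continuous_pow 2)).div_const _).rexp

lemma heatKernel_le (t x : ℝ) (ht : 0 < t) : heatKernel t x ≤ 1 / Real.sqrt (2 * Real.pi * t) := by
  unfold heatKernel
  have h1 : Real.exp (-x ^ 2 / (2 * t)) ≤ 1 := by
    rw [Real.exp_le_one_iff]
    have h : 0 ≤ x ^ 2 / (2 * t) := by positivity
    rw [neg_div]; linarith
  nlinarith [Real.sqrt_nonneg (2 * Real.pi * t), h1, Real.exp_pos (-x ^ 2 / (2 * t)),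
    one_div_nonneg.mpr (Real.sqrt_nonneg (2 * Real.pi * t))]

lemma heatKernel_eq (t : ℝ) (ht : 0 < t) :
    heatKernel t = fun x => (1 / Real.sqrt (2 * Real.pi * t)) * Real.exp (-(1/(2*t)) * x ^ 2) := by
  funext x; unfold heatKernel; ring_nf

lemma heatKernel_integrable {t : ℝ} (ht : 0 < t) : Integrable (heatKernel t) := by
  rw [heatKernel_eq t ht]
  exact (integrable_exp_neg_mul_sq (by positivity)).const_mul _

lemma heatKernel_integral {t : ℝ} (ht : 0 < t) : ∫ x, heatKernel t x = 1 := by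
  rw [heatKernel_eq t ht]
  rw [integral_const_mul, integral_gaussian]
  rw [one_div, inv_mul_eq_one₀ (by positivity)]
  congr 1
  rw [div_div_eq_mul_div]
  field_simp

lemma heatKernel_scale {t k : ℝ} (hk : 0 < k) (x : ℝ) :
    heatKernel t (k * x) = k⁻¹ * heatKernel (t / k ^ 2) x := by
  unfold heatKernel
  have hs : Real.sqrt (2 * Real.pi * (t / k ^ 2)) = Real.sqrt (2 * Real.pi * t) / k := by
    rw [show 2 * Real.pi * (t / k ^ 2) = (2 * Real.pi * t) * (k⁻¹) ^ 2 by field_simp,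
      Real.sqrt_mul' _ (sq_nonneg _), Real.sqrt_sq (inv_nonneg.mpr hk.le), div_eq_mul_inv]
  rw [hs]
  have hexp : -(k * x) ^ 2 / (2 * t) = -x ^ 2 / (2 * (t / k ^ 2)) := by
    rcases eq_or_ne t 0 with h | h
    · simp [h]
    · field_simp
  rw [hexp]
  field_simp

lemma heatKernel_conv {a b : ℝ} (ha : 0 < a) (hb : 0 < b) (z w : ℝ) :
    ∫ y, heatKernel a (y - z) * heatKernel b (y - w) = heatKernel (a + b) (z - w) := by
  have hab : 0 < a + b := by linarith
  have hτ : 0 < a * b / (a + b) := by positivity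
  have key : ∀ y, heatKernel a (y - z) * heatKernel b (y - w)
      = heatKernel (a + b) (z - w) * heatKernel (a * b / (a + b)) (y - (b * z + a * w) / (a + b)) := by
    intro y
    unfold heatKernel
    have hconst : (1 / Real.sqrt (2 * Real.pi * a)) * (1 / Real.sqrt (2 * Real.pi * b))
        = (1 / Real.sqrt (2 * Real.pi * (a + b))) * (1 / Real.sqrt (2 * Real.pi * (a * b / (a + b)))) := by
      rw [div_mul_div_comm, div_mul_div_comm, one_mul,
        ← Real.sqrt_mul (by positivity), ← Real.sqrt_mul (by positivity)]
      rw [show (2 * Real.pi * (a + b)) * (2 * Real.pi * (a * b / (a + b)))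
        = (2 * Real.pi * a) * (2 * Real.pi * b) by field_simp]
    have hexp : (-(y - z) ^ 2 / (2 * a)) + (-(y - w) ^ 2 / (2 * b))
        = (-(z - w) ^ 2 / (2 * (a + b))) + (-(y - (b * z + a * w) / (a + b)) ^ 2 / (2 * (a * b / (a + b)))) := by
      field_simp
      ring
    calc (1 / Real.sqrt (2 * Real.pi * a) * Real.exp (-(y - z) ^ 2 / (2 * a)))
          * (1 / Real.sqrt (2 * Real.pi * b) * Real.exp (-(y - w) ^ 2 / (2 * b)))
        = ((1 / Real.sqrt (2 * Real.pi * a)) * (1 / Real.sqrt (2 * Real.pi * b)))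
          * Real.exp ((-(y - z) ^ 2 / (2 * a)) + (-(y - w) ^ 2 / (2 * b))) := by
          rw [Real.exp_add]; ring
      _ = _ := by rw [hconst, hexp, Real.exp_add]; ring
  simp only [key]
  rw [integral_const_mul, integral_sub_right_eq_self (heatKernel (a * b / (a + b))) _,
    heatKernel_integral hτ, mul_one]

noncomputable def Hfun (f g : ℝ → ℝ) (h : ℝ) : ℝ := ∫ v, f (v + h) * g v

lemma Hfun_cont_bdd (f g : ℝ → ℝ) (hf2 : MemLp f 2 (volume : Measure ℝ))
    (hg2 : MemLp g 2 (volume : Measure ℝ)) :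
    ∃ M : ℝ, Continuous (Hfun f g) ∧ ∀ h, |Hfun f g h| ≤ M := by
  haveI : Fact ((1:ENNReal) ≤ 2) := ⟨by norm_num⟩
  set F2 : Lp ℝ 2 (volume : Measure ℝ) := hf2.toLp f with hF2
  set G2 : Lp ℝ 2 (volume : Measure ℝ) := hg2.toLp g with hG2
  set φ : ℝ → C(ℝ, ℝ) := fun h => ⟨fun x => x + h, by continuity⟩ with hφ
  have hφm : ∀ h : ℝ, MeasurePreserving (φ h) volume volume := fun h =>
    measurePreserving_add_right volume h
  set T : ℝ → Lp ℝ 2 (volume : Measure ℝ) := fun h =>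
    Lp.compMeasurePreserving (φ h) (hφm h) F2 with hT
  have hφcont : Continuous φ := by
    apply ContinuousMap.continuous_of_continuous_uncurry
    exact continuous_snd.add continuous_fst
  have hTcont : Continuous T := by
    rw [continuous_iff_continuousAt]
    intro h
    exact ContinuousAt.compMeasurePreservingLp continuousAt_const (hφcont.continuousAt) hφm
      (by norm_num)
  have hH : ∀ h, Hfun f g h = @inner ℝ _ _ (T h) G2 := by
    intro h
    rw [L2.inner_def]
    have h1 : (T h : ℝ → ℝ) =ᵐ[volume] fun x => f (x + h) := by
      have e1 : (T h : ℝ → ℝ) =ᵐ[volume] (F2 : ℝ → ℝ) ∘ (φ h) :=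
        Lp.coeFn_compMeasurePreserving F2 (hφm h)
      have e2 : ((F2 : ℝ → ℝ) ∘ (φ h)) =ᵐ[volume] (f ∘ (φ h)) :=
        (hφm h).quasiMeasurePreserving.ae_eq_comp (hf2.coeFn_toLp)
      exact e1.trans e2
    have h2 : (G2 : ℝ → ℝ) =ᵐ[volume] g := hg2.coeFn_toLp
    rw [show Hfun f g h = ∫ v, f (v + h) * g v from rfl]
    refine integral_congr_ae ?_ |>.symm
    filter_upwards [h1, h2] with x hx1 hx2
    simp [hx1, hx2, RCLike.inner_apply]
    ring
  refine ⟨‖F2‖ * ‖G2‖, ?_, ?_⟩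
  · have : Continuous fun h => @inner ℝ _ _ (T h) G2 :=
      Continuous.inner hTcont continuous_const
    exact this.congr fun h => (hH h).symm
  · intro h
    rw [hH h]
    calc |@inner ℝ _ _ (T h) G2| ≤ ‖T h‖ * ‖G2‖ := abs_real_inner_le_norm _ _
      _ = ‖F2‖ * ‖G2‖ := by rw [Lp.norm_compMeasurePreserving]

noncomputable def Qfun (f g : ℝ → ℝ) (c : ℝ) : ℝ :=
  ∫ σ, heatKernel 1 σ * Hfun f g (Real.sqrt c * σ)

lemma Qfun_props (f g : ℝ → ℝ) {M : ℝ} (hHc : Continuous (Hfun f g))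
    (hHb : ∀ h, |Hfun f g h| ≤ M) :
    Continuous (Qfun f g) ∧ (∀ c, |Qfun f g c| ≤ M) ∧ Qfun f g 0 = Hfun f g 0 := by
  have h1 : (0:ℝ) < 1 := one_pos
  have hM : 0 ≤ M := le_trans (abs_nonneg _) (hHb 0)
  have hbd : ∀ c σ, ‖heatKernel 1 σ * Hfun f g (Real.sqrt c * σ)‖ ≤ heatKernel 1 σ * M := by
    intro c σ
    rw [norm_mul, Real.norm_eq_abs, Real.norm_eq_abs, abs_of_nonneg (heatKernel_nonneg 1 σ)]
    exact mul_le_mul_of_nonneg_left (hHb _) (heatKernel_nonneg 1 σ)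
  refine ⟨?_, ?_, ?_⟩
  · apply continuous_of_dominated (bound := fun σ => heatKernel 1 σ * M)
    · intro c
      exact ((heatKernel_continuous 1).mul (hHc.comp (continuous_const.mul continuous_id))).aestronglyMeasurable
    · exact fun c => Filter.Eventually.of_forall (hbd c)
    · exact (heatKernel_integrable h1).mul_const M
    · apply Filter.Eventually.of_forall
      intro σ
      exact continuous_const.mul (hHc.comp ((Real.continuous_sqrt).mul continuous_const))
  · intro c
    calc |Qfun f g c| ≤ ∫ σ, heatKernel 1 σ * M := by
          rw [← Real.norm_eq_abs]
          exact norm_integral_le_of_norm_le ((heatKernel_integrable h1).mul_const M)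
            (Filter.Eventually.of_forall (hbd c))
      _ = M := by rw [integral_mul_const, heatKernel_integral h1, one_mul]
  · unfold Qfun
    simp only [Real.sqrt_zero, zero_mul]
    rw [integral_mul_const, heatKernel_integral h1, one_mul]

lemma hk_comp_sub_integrable {t : ℝ} (ht : 0 < t) (u : ℝ) :
    Integrable (fun x => heatKernel t (x - u)) := by
  simpa [sub_eq_add_neg] using (heatKernel_integrable ht).comp_add_right (-u)

lemma hk_comp_sub_aesm (t u : ℝ) :
    AEStronglyMeasurable (fun x : ℝ => heatKernel t (x - u)) volume :=
  ((heatKernel_continuous t).comp (continuous_id.sub continuous_const)).aestronglyMeasurable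

lemma core (f g : ℝ → ℝ) (hf1 : Integrable f) (hg1 : Integrable g)
    {α β : ℝ} (hα : 0 < α) (hβ : 0 < β) :
    ∫ x, (∫ u, heatKernel α (x - u) * f u) * (∫ v, heatKernel β (x - v) * g v)
      = Qfun f g (α + β) := by
  set c := α + β with hcdef
  have hc : 0 < c := by positivity
  set Cα := 1 / Real.sqrt (2 * Real.pi * α) with hCα
  set Cβ := 1 / Real.sqrt (2 * Real.pi * β) with hCβ
  set Cc := 1 / Real.sqrt (2 * Real.pi * c) with hCc
  -- slice integrability
  have hsf : ∀ x : ℝ, Integrable (fun u => heatKernel α (x - u) * f u) := by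
    intro x
    refine hf1.bdd_mul (c := Cα) ?_ (Filter.Eventually.of_forall fun u => ?_)
    · exact ((heatKernel_continuous α).comp (continuous_const.sub continuous_id)).aestronglyMeasurable
    · rw [Real.norm_eq_abs, abs_of_nonneg (heatKernel_nonneg _ _)]
      exact heatKernel_le _ _ hα
  have hsg : ∀ x : ℝ, Integrable (fun v => heatKernel β (x - v) * g v) := by
    intro x
    refine hg1.bdd_mul (c := Cβ) ?_ (Filter.Eventually.of_forall fun v => ?_)
    · exact ((heatKernel_continuous β).comp (continuous_const.sub continuous_id)).aestronglyMeasurable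
    · rw [Real.norm_eq_abs, abs_of_nonneg (heatKernel_nonneg _ _)]
      exact heatKernel_le _ _ hβ
  -- the function on ℝ × (ℝ × ℝ)
  set F : ℝ → ℝ × ℝ → ℝ :=
    fun x p => (heatKernel α (x - p.1) * f p.1) * (heatKernel β (x - p.2) * g p.2) with hF
  have hFaesm : AEStronglyMeasurable (Function.uncurry F)
      ((volume : Measure ℝ).prod ((volume : Measure ℝ).prod (volume : Measure ℝ))) := by
    have h1 : Continuous (fun q : ℝ × (ℝ × ℝ) => heatKernel α (q.1 - q.2.1)) :=
      (heatKernel_continuous α).comp (continuous_fst.sub (continuous_fst.comp continuous_snd))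
    have h2 : Continuous (fun q : ℝ × (ℝ × ℝ) => heatKernel β (q.1 - q.2.2)) :=
      (heatKernel_continuous β).comp (continuous_fst.sub (continuous_snd.comp continuous_snd))
    have h3 : AEStronglyMeasurable (fun q : ℝ × (ℝ × ℝ) => f q.2.1)
        ((volume : Measure ℝ).prod ((volume : Measure ℝ).prod (volume : Measure ℝ))) :=
      hf1.1.comp_quasiMeasurePreserving
        (Measure.quasiMeasurePreserving_fst.comp Measure.quasiMeasurePreserving_snd)
    have h4 : AEStronglyMeasurable (fun q : ℝ × (ℝ × ℝ) => g q.2.2)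
        ((volume : Measure ℝ).prod ((volume : Measure ℝ).prod (volume : Measure ℝ))) :=
      hg1.1.comp_quasiMeasurePreserving
        (Measure.quasiMeasurePreserving_snd.comp Measure.quasiMeasurePreserving_snd)
    exact ((h1.aestronglyMeasurable.mul h3).mul (h2.aestronglyMeasurable.mul h4))
  have hKcb : ∀ y : ℝ, ‖heatKernel c y‖ ≤ Cc := fun y => by
    rw [Real.norm_eq_abs, abs_of_nonneg (heatKernel_nonneg _ _)]
    exact heatKernel_le _ _ hc
  have hKc_aesm : AEStronglyMeasurable (fun p : ℝ × ℝ => heatKernel c (p.1 - p.2))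
      ((volume : Measure ℝ).prod (volume : Measure ℝ)) :=
    ((heatKernel_continuous c).comp (continuous_fst.sub continuous_snd)).aestronglyMeasurable
  have hnormF : ∀ p : ℝ × ℝ, (∫ x, ‖F x p‖)
      = (‖f p.1‖ * ‖g p.2‖) * heatKernel c (p.1 - p.2) := by
    intro p
    have h1 : ∀ x, ‖F x p‖
        = (‖f p.1‖ * ‖g p.2‖) * (heatKernel α (x - p.1) * heatKernel β (x - p.2)) := by
      intro x
      simp only [hF, norm_mul, Real.norm_eq_abs,
        abs_of_nonneg (heatKernel_nonneg α (x - p.1)),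
        abs_of_nonneg (heatKernel_nonneg β (x - p.2))]
      ring
    simp only [h1]
    rw [integral_const_mul, heatKernel_conv hα hβ]
  have hFint : Integrable (Function.uncurry F)
      ((volume : Measure ℝ).prod ((volume : Measure ℝ).prod (volume : Measure ℝ))) := by
    rw [integrable_prod_iff' hFaesm]
    constructor
    · refine Filter.Eventually.of_forall fun p => ?_
      have base : Integrable
          (fun x => heatKernel β (x - p.2) * heatKernel α (x - p.1)) :=
        (hk_comp_sub_integrable hα p.1).bdd_mul (c := Cβ) (hk_comp_sub_aesm β p.2)
          (Filter.Eventually.of_forall fun x => by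
            rw [Real.norm_eq_abs, abs_of_nonneg (heatKernel_nonneg _ _)]
            exact heatKernel_le _ _ hβ)
      exact (base.const_mul (f p.1 * g p.2)).congr
        (Filter.Eventually.of_forall fun x => by simp only [Function.uncurry_apply_pair, hF]; ring)
    · have base : Integrable
          (fun p : ℝ × ℝ => heatKernel c (p.1 - p.2) * (‖f p.1‖ * ‖g p.2‖))
          ((volume : Measure ℝ).prod (volume : Measure ℝ)) :=
        (hf1.norm.mul_prod hg1.norm).bdd_mul hKc_aesm (Filter.Eventually.of_forall fun p => hKcb _)
      exact (base.congr (Filter.Eventually.of_forall fun p => by ring)).congr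
        (Filter.Eventually.of_forall fun p => (hnormF p).symm)
  have hΦint : Integrable (fun p : ℝ × ℝ => (f p.1 * g p.2) * heatKernel c (p.1 - p.2))
      ((volume : Measure ℝ).prod (volume : Measure ℝ)) := by
    have base : Integrable
        (fun p : ℝ × ℝ => heatKernel c (p.1 - p.2) * (f p.1 * g p.2))
        ((volume : Measure ℝ).prod (volume : Measure ℝ)) :=
      (hf1.mul_prod hg1).bdd_mul hKc_aesm (Filter.Eventually.of_forall fun p => hKcb _)
    exact base.congr (Filter.Eventually.of_forall fun p => by ring)
  -- the function for the last Fubini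
  set Φ : ℝ → ℝ → ℝ := fun v w => g v * (f (v + w) * heatKernel c w) with hΦ
  have hΦaesm : AEStronglyMeasurable (Function.uncurry Φ)
      ((volume : Measure ℝ).prod (volume : Measure ℝ)) := by
    have h1 : AEStronglyMeasurable (fun z : ℝ × ℝ => g z.1)
        ((volume : Measure ℝ).prod (volume : Measure ℝ)) :=
      hg1.1.comp_quasiMeasurePreserving Measure.quasiMeasurePreserving_fst
    have h2 : AEStronglyMeasurable (fun z : ℝ × ℝ => f (z.1 + z.2))
        ((volume : Measure ℝ).prod (volume : Measure ℝ)) := by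
      have hmp : MeasurePreserving (fun z : ℝ × ℝ => (z.1, z.1 + z.2))
          ((volume : Measure ℝ).prod (volume : Measure ℝ))
          ((volume : Measure ℝ).prod (volume : Measure ℝ)) :=
        measurePreserving_prod_add (volume : Measure ℝ) (volume : Measure ℝ)
      exact hf1.1.comp_quasiMeasurePreserving
        (Measure.quasiMeasurePreserving_snd.comp hmp.quasiMeasurePreserving)
    have h3 : AEStronglyMeasurable (fun z : ℝ × ℝ => heatKernel c z.2)
        ((volume : Measure ℝ).prod (volume : Measure ℝ)) :=
      ((heatKernel_continuous c).comp continuous_snd).aestronglyMeasurable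
    exact h1.mul (h2.mul h3)
  set If := ∫ u, ‖f u‖ with hIf
  have hΦint2 : Integrable (Function.uncurry Φ)
      ((volume : Measure ℝ).prod (volume : Measure ℝ)) := by
    rw [integrable_prod_iff hΦaesm]
    constructor
    · refine Filter.Eventually.of_forall fun v => ?_
      have base : Integrable (fun w => heatKernel c w * f (v + w)) :=
        (hf1.comp_add_left v).bdd_mul (heatKernel_continuous c).aestronglyMeasurable
          (Filter.Eventually.of_forall fun w => hKcb _)
      exact (base.const_mul (g v)).congr
        (Filter.Eventually.of_forall fun w => by simp only [Function.uncurry_apply_pair, hΦ]; ring)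
    · refine Integrable.mono' (hg1.norm.const_mul (Cc * If))
        (hΦaesm.norm.integral_prod_right') (Filter.Eventually.of_forall fun v => ?_)
      rw [Real.norm_eq_abs, abs_of_nonneg (integral_nonneg fun w => norm_nonneg _)]
      have hRi : Integrable (fun w : ℝ => ‖g v‖ * (Cc * ‖f (v + w)‖)) := by
        exact (((hf1.comp_add_left v).norm.const_mul Cc).const_mul (‖g v‖))
      calc (∫ w, ‖Φ v w‖) ≤ ∫ w, ‖g v‖ * (Cc * ‖f (v + w)‖) := by
            refine integral_mono_of_nonneg (Filter.Eventually.of_forall fun w => norm_nonneg _)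
              hRi (Filter.Eventually.of_forall fun w => ?_)
            simp only [hΦ, norm_mul]
            have h0 : ‖heatKernel c w‖ ≤ Cc := hKcb _
            have h1 : ‖f (v + w)‖ * ‖heatKernel c w‖ ≤ Cc * ‖f (v + w)‖ := by
              rw [mul_comm]
              exact mul_le_mul_of_nonneg_right h0 (norm_nonneg _)
            exact mul_le_mul_of_nonneg_left h1 (norm_nonneg _)
        _ = Cc * If * ‖g v‖ := by
            rw [integral_const_mul, integral_const_mul]
            rw [show (∫ w, ‖f (v + w)‖) = If by
              rw [hIf, ← integral_add_left_eq_self (fun u => ‖f u‖) v]]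
            ring
  -- now the main computation
  have hsc : 0 < Real.sqrt c := Real.sqrt_pos.mpr hc
  calc ∫ x, (∫ u, heatKernel α (x - u) * f u) * (∫ v, heatKernel β (x - v) * g v)
      = ∫ x, ∫ p, F x p ∂((volume : Measure ℝ).prod (volume : Measure ℝ)) := by
        refine integral_congr_ae (Filter.Eventually.of_forall fun x => ?_)
        exact (integral_prod_mul (fun u => heatKernel α (x - u) * f u)
          (fun v => heatKernel β (x - v) * g v)).symm
    _ = ∫ p, ∫ x, F x p ∂(volume : Measure ℝ)
          ∂((volume : Measure ℝ).prod (volume : Measure ℝ)) :=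
        integral_integral_swap hFint
    _ = ∫ p, (f p.1 * g p.2) * heatKernel c (p.1 - p.2)
          ∂((volume : Measure ℝ).prod (volume : Measure ℝ)) := by
        refine integral_congr_ae (Filter.Eventually.of_forall fun p => ?_)
        have h1 : ∀ x, F x p
            = (f p.1 * g p.2) * (heatKernel α (x - p.1) * heatKernel β (x - p.2)) := by
          intro x; simp only [hF]; ring
        simp only [h1]
        rw [integral_const_mul, heatKernel_conv hα hβ]
    _ = ∫ v, ∫ u, (f u * g v) * heatKernel c (u - v) :=
        integral_prod_symm _ hΦint
    _ = ∫ v, ∫ w, Φ v w := by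
        refine integral_congr_ae (Filter.Eventually.of_forall fun v => ?_)
        show (∫ u, (f u * g v) * heatKernel c (u - v)) = ∫ w, Φ v w
        rw [← integral_add_left_eq_self (fun u => (f u * g v) * heatKernel c (u - v)) v]
        refine integral_congr_ae (Filter.Eventually.of_forall fun w => ?_)
        simp only [hΦ, add_sub_cancel_left]
        ring
    _ = ∫ w, ∫ v, Φ v w := integral_integral_swap hΦint2
    _ = ∫ w, heatKernel c w * Hfun f g w := by
        refine integral_congr_ae (Filter.Eventually.of_forall fun w => ?_)
        have h1 : ∀ v, Φ v w = heatKernel c w * (f (v + w) * g v) := by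
          intro v; simp only [hΦ]; ring
        simp only [h1]
        rw [integral_const_mul]
        rfl
    _ = Qfun f g c := by
        have h4 : (∫ σ, heatKernel c (Real.sqrt c * σ) * Hfun f g (Real.sqrt c * σ))
            = |(Real.sqrt c)⁻¹| • ∫ w, heatKernel c w * Hfun f g w :=
          Measure.integral_comp_mul_left (fun w => heatKernel c w * Hfun f g w) (Real.sqrt c)
        have key : ∀ σ : ℝ, heatKernel c (Real.sqrt c * σ) * Hfun f g (Real.sqrt c * σ)
            = (Real.sqrt c)⁻¹ * (heatKernel 1 σ * Hfun f g (Real.sqrt c * σ)) := by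
          intro σ
          rw [heatKernel_scale hsc, Real.sq_sqrt hc.le, div_self hc.ne']
          ring
        simp only [key, smul_eq_mul, abs_of_nonneg (inv_nonneg.mpr hsc.le)] at h4
        rw [integral_const_mul] at h4
        have := mul_left_cancel₀ (inv_ne_zero hsc.ne') h4
        rw [← this]
        rfl

lemma step1 (f : ℝ → ℝ) {a N : ℝ} (ha : 0 < a) (hN : 0 < N) (y : ℝ) :
    heatP a (scaled N f) y
      = (1 / Real.sqrt N) * ∫ u, heatKernel (a / N ^ 2) (y / N - u) * f u := by
  rw [heatP, if_neg ha.ne']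
  have h1 : ∀ z : ℝ, heatKernel a (y - z) * scaled N f z
      = (1 / Real.sqrt N) * ((fun u => heatKernel a (y - N * u) * f u) (z / N)) := by
    intro z
    simp only [scaled, mul_div_cancel₀ _ hN.ne']
    ring_nf
  rw [integral_congr_ae (Filter.Eventually.of_forall h1), integral_const_mul,
    Measure.integral_comp_div (fun u => heatKernel a (y - N * u) * f u) N]
  have h2 : ∀ u : ℝ, heatKernel a (y - N * u) * f u
      = N⁻¹ * (heatKernel (a / N ^ 2) (y / N - u) * f u) := by
    intro u
    rw [show y - N * u = N * (y / N - u) by field_simp, heatKernel_scale hN]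
    ring
  rw [integral_congr_ae (Filter.Eventually.of_forall h2), integral_const_mul,
    abs_of_pos hN, smul_eq_mul]
  field_simp

lemma step2 (φ ψ : ℝ → ℝ) {N : ℝ} (hN : 0 < N) :
    ∫ y, ((1 / Real.sqrt N) * φ (y / N)) * ((1 / Real.sqrt N) * ψ (y / N))
      = ∫ x, φ x * ψ x := by
  have h1 : ∀ y : ℝ, ((1 / Real.sqrt N) * φ (y / N)) * ((1 / Real.sqrt N) * ψ (y / N))
      = N⁻¹ * ((fun x => φ x * ψ x) (y / N)) := by
    intro y
    have h : Real.sqrt N * Real.sqrt N = N := Real.mul_self_sqrt hN.le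
    simp only []
    rw [show ((1 / Real.sqrt N) * φ (y / N)) * ((1 / Real.sqrt N) * ψ (y / N))
      = (Real.sqrt N * Real.sqrt N)⁻¹ * (φ (y / N) * ψ (y / N)) by
        rw [mul_inv]; ring, h]
  rw [integral_congr_ae (Filter.Eventually.of_forall h1), integral_const_mul,
    Measure.integral_comp_div (fun x => φ x * ψ x) N, abs_of_pos hN, smul_eq_mul]
  field_simp


theorem stmt0 (t r₁ r₂ : ℝ) (ht : 0 < t) (hr₁ : 0 ≤ r₁) (hr₂ : 0 ≤ r₂)
    (f g : ℝ → ℝ) (hf1 : Integrable f) (hf2 : MemLp f 2) (hg1 : Integrable g)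
    (hg2 : MemLp g 2) :
    Tendsto
      (fun N : ℝ =>
        ∫ s in (0:ℝ)..t, ∫ y : ℝ,
          heatP (s + r₁) (scaled N f) y * heatP (s + r₂) (scaled N g) y)
      atTop (nhds (t * ∫ x : ℝ, f x * g x)) := by
  obtain ⟨M, hHc, hHb⟩ := Hfun_cont_bdd f g hf2 hg2
  obtain ⟨hQc, hQb, hQ0⟩ := Qfun_props f g hHc hHb
  have hQ0' : Qfun f g 0 = ∫ x, f x * g x := by
    rw [hQ0]
    unfold Hfun
    simp only [add_zero]
  have inner_eq : ∀ N : ℝ, 0 < N → ∀ s : ℝ, 0 < s →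
      (∫ y, heatP (s + r₁) (scaled N f) y * heatP (s + r₂) (scaled N g) y)
        = Qfun f g ((2 * s + r₁ + r₂) / N ^ 2) := by
    intro N hN s hs
    have ha : 0 < s + r₁ := by linarith
    have hb : 0 < s + r₂ := by linarith
    have hA : 0 < (s + r₁) / N ^ 2 := by positivity
    have hB : 0 < (s + r₂) / N ^ 2 := by positivity
    have e1 : (∫ y, heatP (s + r₁) (scaled N f) y * heatP (s + r₂) (scaled N g) y)
        = ∫ y, ((1 / Real.sqrt N) * (∫ u, heatKernel ((s + r₁) / N ^ 2) (y / N - u) * f u))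
            * ((1 / Real.sqrt N) * (∫ v, heatKernel ((s + r₂) / N ^ 2) (y / N - v) * g v)) := by
      refine integral_congr_ae (Filter.Eventually.of_forall fun y => ?_)
      show heatP (s + r₁) (scaled N f) y * heatP (s + r₂) (scaled N g) y = _
      rw [step1 f ha hN y, step1 g hb hN y]
    rw [e1]
    rw [step2 (fun x => ∫ u, heatKernel ((s + r₁) / N ^ 2) (x - u) * f u)
      (fun x => ∫ v, heatKernel ((s + r₂) / N ^ 2) (x - v) * g v) hN]
    rw [core f g hf1 hg1 hA hB]
    congr 1
    rw [← add_div]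
    congr 1
    ring
  have hev : (fun N : ℝ =>
        ∫ s in (0:ℝ)..t, ∫ y : ℝ,
          heatP (s + r₁) (scaled N f) y * heatP (s + r₂) (scaled N g) y)
      =ᶠ[atTop] (fun N : ℝ => ∫ s in Set.Ioc (0:ℝ) t,
          Qfun f g ((2 * s + r₁ + r₂) / N ^ 2)) := by
    filter_upwards [eventually_gt_atTop (0:ℝ)] with N hN
    rw [intervalIntegral.integral_of_le ht.le]
    refine setIntegral_congr_fun measurableSet_Ioc fun s hs => ?_
    exact inner_eq N hN s hs.1
  have key : Tendsto (fun N : ℝ => ∫ s in Set.Ioc (0:ℝ) t,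
        Qfun f g ((2 * s + r₁ + r₂) / N ^ 2)) atTop
      (nhds (∫ _ in Set.Ioc (0:ℝ) t, Qfun f g 0)) := by
    refine tendsto_integral_filter_of_dominated_convergence (fun _ => M) ?_ ?_ ?_ ?_
    · refine Filter.Eventually.of_forall fun N => ?_
      exact ((hQc.comp (by continuity : Continuous fun s : ℝ => (2 * s + r₁ + r₂) / N ^ 2))).aestronglyMeasurable.restrict
    · refine Filter.Eventually.of_forall fun N => ?_
      refine Filter.Eventually.of_forall fun s => ?_
      rw [Real.norm_eq_abs]
      exact hQb _
    · rw [integrable_const_iff]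
      right
      constructor
      rw [Measure.restrict_apply_univ, Real.volume_Ioc]
      exact ENNReal.ofReal_lt_top
    · refine Filter.Eventually.of_forall fun s => ?_
      have h1 : Tendsto (fun N : ℝ => (2 * s + r₁ + r₂) / N ^ 2) atTop (nhds 0) := by
        simp only [div_eq_mul_inv]
        rw [show (0:ℝ) = (2 * s + r₁ + r₂) * 0 by ring]
        exact tendsto_const_nhds.mul
          (tendsto_inv_atTop_zero.comp (tendsto_pow_atTop two_ne_zero))
      exact (hQc.continuousAt.tendsto).comp h1
  have hconst : (∫ _ in Set.Ioc (0:ℝ) t, Qfun f g 0) = t * ∫ x, f x * g x := by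
    rw [setIntegral_const, Real.volume_real_Ioc_of_le ht.le, sub_zero,
      smul_eq_mul, hQ0']
  rw [hconst] at key
  exact Tendsto.congr' hev.symm key
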